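/- If û : ℝ → [0,1] is a monotone increasing C¹ wave profile with limits a₁ at -∞ and a₂ at +∞, and there exists c > 0 such that c·û'(x) = û(x) - (w ∗ F(û))(x) for all x, where w ≥ 0 with ∫w = 1 and F : ℝ → [0,1], then û' ∈ L²(ℝ), with ∫ û'(x)² dx ≤ (a₂/c + 1)(a₂ - a₁). -/
import Mathlib

open MeasureTheory Filter

/-- square-integrability of the derivative of a traveling wave profile
with positive speed, with the explicit bound `(a₂/c + 1)(a₂ - a₁)`. -/
theorem traveling_wave_profile_deriv_L2
    (w F uhat uhat' : ℝ → ℝ) (a₁ a₂ c : ℝ)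
    (hw_nonneg : ∀ x, 0 ≤ w x) (hw_int : Integrable w)
    (hw_mass : ∫ x, w x = 1)
    (hF : ∀ x, F x ∈ Set.Icc (0:ℝ) 1)
    (huhat_mono : Monotone uhat)
    (huhat_deriv : ∀ x, HasDerivAt uhat (uhat' x) x)
    (huhat'_cont : Continuous uhat')
    (huhat_range : ∀ x, uhat x ∈ Set.Icc (0:ℝ) 1)
    (huhat_bot : Tendsto uhat atBot (nhds a₁))
    (huhat_top : Tendsto uhat atTop (nhds a₂))
    (ha : a₁ < a₂) (hc : 0 < c)
    (hTW : ∀ x, c * uhat' x = uhat x - ∫ y, w (x - y) * F (uhat y)) :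
    Integrable (fun x => (uhat' x) ^ 2) ∧
      ∫ x, (uhat' x) ^ 2 ≤ (a₂ / c + 1) * (a₂ - a₁) := by
  have hd : ∀ x, deriv uhat x = uhat' x := fun x => (huhat_deriv x).deriv
  have h0 : ∀ x, 0 ≤ uhat' x := by
    intro x
    have ht := hasDerivAt_iff_tendsto_slope.mp (huhat_deriv x)
    refine ge_of_tendsto ht (Filter.eventually_of_mem self_mem_nhdsWithin fun y hy => ?_)
    rw [slope_def_field]
    rcases lt_or_gt_of_ne (Set.mem_compl_singleton_iff.mp hy) with h | h
    · have h1 : uhat y - uhat x ≤ 0 := by linarith [huhat_mono h.le]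
      have h2 : y - x < 0 := by linarith
      rw [div_nonneg_iff]; right; exact ⟨h1, h2.le⟩
    · exact div_nonneg (by linarith [huhat_mono h.le]) (by linarith)
  have hle_a2 : ∀ x, uhat x ≤ a₂ := fun x =>
    huhat_mono.ge_of_tendsto huhat_top x
  have hge_a1 : ∀ x, a₁ ≤ uhat x := fun x =>
    huhat_mono.le_of_tendsto huhat_bot x
  have ha2nn : 0 ≤ a₂ := le_trans (huhat_range 0).1 (hle_a2 0)
  have hMnn : 0 ≤ a₂ / c := div_nonneg ha2nn hc.le
  have hub : ∀ x, uhat' x ≤ a₂ / c := by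
    intro x
    have hconv : 0 ≤ ∫ y, w (x - y) * F (uhat y) :=
      integral_nonneg fun y => mul_nonneg (hw_nonneg _) (hF _).1
    rw [le_div_iff₀ hc]
    nlinarith [hTW x, hle_a2 x]
  have hcontI : ∀ a b : ℝ, IntervalIntegrable uhat' volume a b := fun a b =>
    huhat'_cont.intervalIntegrable a b
  have hFTC : ∀ a b : ℝ, ∫ x in a..b, uhat' x = uhat b - uhat a := fun a b =>
    intervalIntegral.integral_eq_sub_of_hasDerivAt (fun x _ => huhat_deriv x) (hcontI a b)
  have hbd : ∀ n : ℕ, ∫ x in (-(n:ℝ))..(n:ℝ), ‖uhat' x‖ ≤ a₂ - a₁ := by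
    intro n
    have : ∫ x in (-(n:ℝ))..(n:ℝ), ‖uhat' x‖ = ∫ x in (-(n:ℝ))..(n:ℝ), uhat' x := by
      apply intervalIntegral.integral_congr
      intro x _
      exact Real.norm_of_nonneg (h0 x)
    rw [this, hFTC]
    linarith [hle_a2 (n:ℝ), hge_a1 (-(n:ℝ))]
  have hint : Integrable uhat' := by
    refine integrable_of_intervalIntegral_norm_bounded (a₂ - a₁)
      (μ := volume) (l := atTop) (a := fun n : ℕ => -(n:ℝ)) (b := fun n : ℕ => (n:ℝ))
      (fun n => (hcontI _ _).1) ?_ ?_ (Eventually.of_forall hbd)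
    · exact tendsto_neg_atBot_iff.mpr tendsto_natCast_atTop_atTop
    · exact tendsto_natCast_atTop_atTop
  have hint_le : ∫ x, uhat' x ≤ a₂ - a₁ := by
    have h1 : Tendsto (fun n : ℕ => ∫ x in (-(n:ℝ))..(n:ℝ), uhat' x) atTop (nhds (∫ x, uhat' x)) :=
      intervalIntegral_tendsto_integral hint
        (tendsto_neg_atBot_iff.mpr tendsto_natCast_atTop_atTop) tendsto_natCast_atTop_atTop
    refine le_of_tendsto h1 (Eventually.of_forall fun n => ?_)
    rw [hFTC]
    linarith [hle_a2 (n:ℝ), hge_a1 (-(n:ℝ))]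
  have hintsq : Integrable (fun x => (uhat' x) ^ 2) := by
    refine (hint.const_mul (a₂ / c)).mono ?_ (Eventually.of_forall fun x => ?_)
    · exact (huhat'_cont.pow 2).aestronglyMeasurable
    · rw [Real.norm_of_nonneg (sq_nonneg _), Real.norm_of_nonneg (mul_nonneg hMnn (h0 x))]
      nlinarith [hub x, h0 x]
  refine ⟨hintsq, ?_⟩
  have h2 : ∫ x, (uhat' x) ^ 2 ≤ ∫ x, (a₂ / c) * uhat' x := by
    refine integral_mono hintsq (hint.const_mul _) fun x => ?_
    nlinarith [hub x, h0 x]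
  rw [integral_const_mul] at h2
  have : (a₂ / c) * ∫ x, uhat' x ≤ (a₂ / c) * (a₂ - a₁) := by
    exact mul_le_mul_of_nonneg_left hint_le hMnn
  nlinarith [this, h2, ha]
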